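/- Let α be a linear order and let C₁, C₂ : Fin k → α be monotone sequences. The sets of values (images) satisfy: the image of C₁ ⊔ C₂ together with the image of C₁ ⊓ C₂ has total cardinality at least that of the images of C₁ and C₂, i.e., |Im(C₁ ⊔ C₂)| + |Im(C₁ ⊓ C₂)| ≥ |Im(C₁)| + |Im(C₂)|. -/
import Mathlib


theorem image_card_supermodular {α : Type*} [LinearOrder α] {k : ℕ}
    (C₁ C₂ : Fin k → α) (h₁ : Monotone C₁) (h₂ : Monotone C₂) :
    (Finset.univ.image (C₁ ⊔ C₂)).card + (Finset.univ.image (C₁ ⊓ C₂)).card ≥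
      (Finset.univ.image C₁).card + (Finset.univ.image C₂).card := by
  classical
  have hU : (Finset.univ.image C₁ ∪ Finset.univ.image C₂) ⊆
      (Finset.univ.image (C₁ ⊔ C₂) ∪ Finset.univ.image (C₁ ⊓ C₂)) := by
    intro x hx
    simp only [Finset.mem_union, Finset.mem_image, Finset.mem_univ, true_and] at hx ⊢
    rcases hx with ⟨i, rfl⟩ | ⟨i, rfl⟩
    · rcases le_total (C₂ i) (C₁ i) with h | h
      · exact Or.inl ⟨i, by simp [Pi.sup_apply, sup_eq_left.2 h]⟩
      · exact Or.inr ⟨i, by simp [Pi.inf_apply, inf_eq_left.2 h]⟩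
    · rcases le_total (C₁ i) (C₂ i) with h | h
      · exact Or.inl ⟨i, by simp [Pi.sup_apply, sup_eq_right.2 h]⟩
      · exact Or.inr ⟨i, by simp [Pi.inf_apply, inf_eq_right.2 h]⟩
  have hI : (Finset.univ.image C₁ ∩ Finset.univ.image C₂) ⊆
      (Finset.univ.image (C₁ ⊔ C₂) ∩ Finset.univ.image (C₁ ⊓ C₂)) := by
    intro x hx
    simp only [Finset.mem_inter, Finset.mem_image, Finset.mem_univ, true_and] at hx ⊢
    obtain ⟨⟨i, hi⟩, ⟨j, hj⟩⟩ := hx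
    rcases le_total i j with hij | hij
    · have ha : C₂ i ≤ C₁ i := (h₂ hij).trans (hj.trans hi.symm).le
      have hb : C₂ j ≤ C₁ j := (hj.trans hi.symm).le.trans (h₁ hij)
      exact ⟨⟨i, by simp only [Pi.sup_apply]; rw [sup_eq_left.2 ha]; exact hi⟩,
             ⟨j, by simp only [Pi.inf_apply]; rw [inf_eq_right.2 hb]; exact hj⟩⟩
    · have ha : C₁ j ≤ C₂ j := (h₁ hij).trans (hi.trans hj.symm).le
      have hb : C₁ i ≤ C₂ i := (hi.trans hj.symm).le.trans (h₂ hij)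
      exact ⟨⟨j, by simp only [Pi.sup_apply]; rw [sup_eq_right.2 ha]; exact hj⟩,
             ⟨i, by simp only [Pi.inf_apply]; rw [inf_eq_left.2 hb]; exact hi⟩⟩
  have e1 := Finset.card_union_add_card_inter (Finset.univ.image (C₁ ⊔ C₂))
    (Finset.univ.image (C₁ ⊓ C₂))
  have e2 := Finset.card_union_add_card_inter (Finset.univ.image C₁)
    (Finset.univ.image C₂)
  rw [ge_iff_le, ← e1, ← e2]
  exact add_le_add (Finset.card_le_card hU) (Finset.card_le_card hI)
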